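/- Let (X,‖·‖,τ) be a Saks space with norming directed system Γ_τ of τ-continuous seminorms generating τ. Let 𝒩₁ be the set of all pairs of sequences ((p_n),(a_n)) with (p_n)⊂Γ_τ and (a_n) a real null sequence with 0 ≤ a_n ≤ 1 for all n, and set Γ_{γ_s} := { |||·|||_{(p_n,a_n)} : ((p_n),(a_n))∈𝒩₁ }. Then Γ_{γ_s} is a directed system of continuous seminorms generating the submixed topology γ_s, and Γ_{γ_s} is norming, i.e. ‖x‖ = sup_{q∈Γ_{γ_s}} q(x) for all x∈X. -/

import Mathlib

open Filter Topology Set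

namespace LumerPhillips

variable {X : Type*}

section Defs

variable [NormedAddCommGroup X] [NormedSpace ℝ X]

/-- A directed set of seminorms. -/
def DirectedSeminorms (Γ : Set (Seminorm ℝ X)) : Prop :=
  ∀ p ∈ Γ, ∀ q ∈ Γ, ∃ r ∈ Γ, p ≤ r ∧ q ≤ r

/-- `Γ` is a system of `t`-continuous seminorms generating the topology `t`, i.e. `t` is
the locally convex topology induced by the seminorms in `Γ`. -/
def GeneratesTop (Γ : Set (Seminorm ℝ X)) (t : TopologicalSpace X) : Prop :=
  (∀ p ∈ Γ, @Continuous X ℝ t _ p) ∧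
    t = ⨅ p : Γ,
      (p : Seminorm ℝ X).toSeminormedAddCommGroup.toUniformSpace.toTopologicalSpace

/-- `Γ` is norming: the norm is the pointwise supremum of the seminorms in `Γ`. -/
def NormingSeminorms (Γ : Set (Seminorm ℝ X)) : Prop :=
  ∀ x : X, ‖x‖ = ⨆ p : Γ, (p : Seminorm ℝ X) x

/-- `(X,‖·‖,τ)` is a Saks space witnessed by the norming directed system `Γ` of τ-continuous
seminorms generating `τ`; `τ` is a Hausdorff locally convex topology coarser than the norm
topology. -/
def IsSaksSystem (τ : TopologicalSpace X) (Γ : Set (Seminorm ℝ X)) : Prop :=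
  @T2Space X τ ∧ @LocallyConvexSpace ℝ X _ _ _ _ τ ∧
    (inferInstance : TopologicalSpace X) ≤ τ ∧
    DirectedSeminorms Γ ∧ GeneratesTop Γ τ ∧ NormingSeminorms Γ

/-- `t` is a linear (vector space) topology on `X`. -/
def IsLinearTop (t : TopologicalSpace X) : Prop :=
  @IsTopologicalAddGroup X t _ ∧ @ContinuousSMul ℝ X _ _ t

/-- The topologies `t` and `s` agree (as subspace topologies) on every norm-bounded set. -/
def AgreeOnBoundedSets (t s : TopologicalSpace X) : Prop :=
  ∀ S : Set X, Bornology.IsBounded S →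
    TopologicalSpace.induced ((↑) : S → X) t = TopologicalSpace.induced ((↑) : S → X) s

/-- `γ` is the mixed topology `γ(‖·‖,τ)`: the finest linear topology that agrees with `τ` on
norm-bounded sets and lies between `τ` and the norm topology. (Recall that in Mathlib's order
on topologies, `t ≤ s` means `t` is finer than `s`.) -/
def IsMixedTopology (τ γ : TopologicalSpace X) : Prop :=
  (IsLinearTop γ ∧ γ ≤ τ ∧ (inferInstance : TopologicalSpace X) ≤ γ ∧ AgreeOnBoundedSets γ τ) ∧
    ∀ t : TopologicalSpace X, IsLinearTop t → t ≤ τ →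
      (inferInstance : TopologicalSpace X) ≤ t → AgreeOnBoundedSets t τ → γ ≤ t

/-- `u` is a Cauchy sequence for the (group) topology `t`. -/
def CauchySeqTop (t : TopologicalSpace X) (u : ℕ → X) : Prop :=
  ∀ V ∈ @nhds X t 0, ∃ N : ℕ, ∀ m ≥ N, ∀ n ≥ N, u m - u n ∈ V

/-- `(X,t)` is sequentially complete. -/
def SeqCompleteTop (t : TopologicalSpace X) : Prop :=
  ∀ u : ℕ → X, CauchySeqTop t u → ∃ x : X, Filter.Tendsto u atTop (@nhds X t x)

/-- `(X,t)` is complete (every Cauchy filter for the group uniformity of `t` converges). -/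
def CompleteTop (t : TopologicalSpace X) : Prop :=
  ∀ F : Filter X, F.NeBot →
    (∀ V ∈ @nhds X t 0, ∃ S ∈ F, ∀ x ∈ S, ∀ y ∈ S, x - y ∈ V) →
    ∃ x : X, F ≤ @nhds X t x

/-- The map `λ - A` on the domain `D` of the linear operator `A`. -/
def lmap (D : Submodule ℝ X) (A : D →ₗ[ℝ] X) (l : ℝ) : D → X :=
  fun x => l • (x : X) - A x

/-- The operator `(A, D)` is `Γ`-dissipative: `p((λ - A)x) ≥ λ p(x)` for all `λ > 0`,
`x ∈ D` and `p ∈ Γ`. -/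
def GammaDissipative (Γ : Set (Seminorm ℝ X)) (D : Submodule ℝ X) (A : D →ₗ[ℝ] X) : Prop :=
  ∀ l : ℝ, 0 < l → ∀ x : D, ∀ p ∈ Γ, l * p (x : X) ≤ p (lmap D A l x)

/-- The range of `λ - A`. -/
def opRange (D : Submodule ℝ X) (A : D →ₗ[ℝ] X) (l : ℝ) : Set X :=
  Set.range (lmap D A l)

/-- The graph of the operator `(A, D)`. -/
def graphSet (D : Submodule ℝ X) (A : D →ₗ[ℝ] X) : Set (X × X) :=
  {p : X × X | ∃ x : D, p = ((x : X), A x)}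

/-- The operator `(A, D)` is `t`-closed (equivalently: its graph is closed for the product
topology, which is the net formulation of closedness). -/
def ClosedOp (t : TopologicalSpace X) (D : Submodule ℝ X) (A : D →ₗ[ℝ] X) : Prop :=
  @IsClosed (X × X) (@instTopologicalSpaceProd X X t t) (graphSet D A)

/-- The operator `(A, D)` is sequentially `t`-closed. -/
def SeqClosedOp (t : TopologicalSpace X) (D : Submodule ℝ X) (A : D →ₗ[ℝ] X) : Prop :=
  ∀ (u : ℕ → D) (x y : X),
    Filter.Tendsto (fun n => (u n : X)) atTop (@nhds X t x) →
    Filter.Tendsto (fun n => A (u n)) atTop (@nhds X t y) →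
    ∃ hx : x ∈ D, A ⟨x, hx⟩ = y

/-- `(A', D')` is an extension of `(A, D)`. -/
def ExtensionOp (D : Submodule ℝ X) (A : D →ₗ[ℝ] X)
    (D' : Submodule ℝ X) (A' : D' →ₗ[ℝ] X) : Prop :=
  ∃ h : D ≤ D', ∀ x : D, A' ⟨(x : X), h x.2⟩ = A x

/-- `(A', D')` is the `t`-closure of `(A, D)`: the smallest `t`-closed extension. -/
def IsClosureOp (t : TopologicalSpace X) (D : Submodule ℝ X) (A : D →ₗ[ℝ] X)
    (D' : Submodule ℝ X) (A' : D' →ₗ[ℝ] X) : Prop :=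
  ExtensionOp D A D' A' ∧ ClosedOp t D' A' ∧
    ∀ (D'' : Submodule ℝ X) (A'' : D'' →ₗ[ℝ] X),
      ExtensionOp D A D'' A'' → ClosedOp t D'' A'' → ExtensionOp D' A' D'' A''

/-- `T` is a semigroup of linear operators which is strongly continuous for the topology `t`. -/
def IsSemigroupOn (t : TopologicalSpace X) (T : ℝ → X →ₗ[ℝ] X) : Prop :=
  T 0 = LinearMap.id ∧ (∀ s u : ℝ, 0 ≤ s → 0 ≤ u → T (s + u) = (T s).comp (T u)) ∧
    ∀ x : X, @ContinuousOn ℝ X _ t (fun s => T s x) (Set.Ici 0)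

/-- `T` is equicontinuous with respect to the system of seminorms `Γ`. -/
def EquicontOn (Γ : Set (Seminorm ℝ X)) (T : ℝ → X →ₗ[ℝ] X) : Prop :=
  ∀ p ∈ Γ, ∃ q ∈ Γ, ∃ C : ℝ, 0 ≤ C ∧ ∀ s : ℝ, 0 ≤ s → ∀ x : X, p (T s x) ≤ C * q x

/-- `T` is a contraction semigroup: `‖T(t)‖ ≤ 1` for all `t ≥ 0`. -/
def ContractionSG (T : ℝ → X →ₗ[ℝ] X) : Prop :=
  ∀ s : ℝ, 0 ≤ s → ∀ x : X, ‖T s x‖ ≤ ‖x‖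

/-- `T` is `(‖·‖,τ)`-equitight with respect to the system of seminorms `Γτ` generating `τ`. -/
def EquitightSG (Γτ : Set (Seminorm ℝ X)) (T : ℝ → X →ₗ[ℝ] X) : Prop :=
  ∀ ε : ℝ, 0 < ε → ∀ p ∈ Γτ, ∃ q ∈ Γτ, ∃ C : ℝ, 0 ≤ C ∧
    ∀ s : ℝ, 0 ≤ s → ∀ x : X, p (T s x) ≤ C * q x + ε * ‖x‖

/-- `T` is a `τ`-bi-continuous semigroup. -/
def IsBiContSG (τ : TopologicalSpace X) (T : ℝ → X →ₗ[ℝ] X) : Prop :=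
  IsSemigroupOn τ T ∧
    (∃ M : ℝ, 1 ≤ M ∧ ∃ ω : ℝ, ∀ s : ℝ, 0 ≤ s → ∀ x : X,
      ‖T s x‖ ≤ M * Real.exp (ω * s) * ‖x‖) ∧
    ∀ (x : ℕ → X) (x₀ : X), (∃ C : ℝ, ∀ n, ‖x n‖ ≤ C) →
      Filter.Tendsto x atTop (@nhds X τ x₀) →
      ∀ t₀ : ℝ, 0 < t₀ → ∀ V ∈ @nhds X τ 0,
        ∃ N : ℕ, ∀ n ≥ N, ∀ s ∈ Set.Icc (0 : ℝ) t₀, T s (x n - x₀) ∈ V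

/-- `(A, D)` is the generator of the `τ`-bi-continuous semigroup `T`. -/
def IsGeneratorBi (τ : TopologicalSpace X) (T : ℝ → X →ₗ[ℝ] X)
    (D : Submodule ℝ X) (A : D →ₗ[ℝ] X) : Prop :=
  (∀ x : X, x ∈ D ↔
      ((∃ y : X, Filter.Tendsto (fun s : ℝ => s⁻¹ • (T s x - x)) (𝓝[>] (0 : ℝ))
          (@nhds X τ y)) ∧
        ∃ C : ℝ, ∀ s ∈ Set.Ioc (0 : ℝ) 1, ‖T s x - x‖ ≤ C * s)) ∧
    ∀ x : D, Filter.Tendsto (fun s : ℝ => s⁻¹ • (T s (x : X) - (x : X))) (𝓝[>] (0 : ℝ))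
      (@nhds X τ (A x))

/-- `(A, D)` is the generator of the `t`-strongly continuous semigroup `T` (locally convex
setting). -/
def IsGeneratorLC (t : TopologicalSpace X) (T : ℝ → X →ₗ[ℝ] X)
    (D : Submodule ℝ X) (A : D →ₗ[ℝ] X) : Prop :=
  (∀ x : X, x ∈ D ↔
      ∃ y : X, Filter.Tendsto (fun s : ℝ => s⁻¹ • (T s x - x)) (𝓝[>] (0 : ℝ)) (@nhds X t y)) ∧
    ∀ x : D, Filter.Tendsto (fun s : ℝ => s⁻¹ • (T s (x : X) - (x : X))) (𝓝[>] (0 : ℝ))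
      (@nhds X t (A x))

/-- `D` is bi-dense in `X`: every point is the `τ`-limit of a norm-bounded sequence in `D`. -/
def BiDenselyDefined (τ : TopologicalSpace X) (D : Submodule ℝ X) : Prop :=
  ∀ x : X, ∃ u : ℕ → D, (∃ C : ℝ, ∀ n, ‖(u n : X)‖ ≤ C) ∧
    Filter.Tendsto (fun n => (u n : X)) atTop (@nhds X τ x)

/-- The seminorms `|||x||| = sup_n p_n(x) a_n` with `(p_n) ⊆ Γτ` and `(a_n)` a non-negative
real null sequence; they generate the submixed topology `γ_s`. -/
def SubmixedSet (Γτ : Set (Seminorm ℝ X)) : Set (Seminorm ℝ X) :=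
  {q : Seminorm ℝ X | ∃ (pn : ℕ → Seminorm ℝ X) (an : ℕ → ℝ),
      (∀ n, pn n ∈ Γτ) ∧ (∀ n, 0 ≤ an n) ∧ Filter.Tendsto an atTop (nhds 0) ∧
      ∀ x : X, q x = ⨆ n : ℕ, pn n x * an n}

/-- The subfamily of submixed seminorms with coefficients `0 ≤ a_n ≤ 1`. -/
def SubmixedSetOne (Γτ : Set (Seminorm ℝ X)) : Set (Seminorm ℝ X) :=
  {q : Seminorm ℝ X | ∃ (pn : ℕ → Seminorm ℝ X) (an : ℕ → ℝ),
      (∀ n, pn n ∈ Γτ) ∧ (∀ n, 0 ≤ an n ∧ an n ≤ 1) ∧ Filter.Tendsto an atTop (nhds 0) ∧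
      ∀ x : X, q x = ⨆ n : ℕ, pn n x * an n}

/-- The dual norm of a linear functional (as the supremum over the closed unit ball). -/
noncomputable def dualNormF (f : X →ₗ[ℝ] ℝ) : ℝ :=
  ⨆ x : {x : X // ‖x‖ ≤ 1}, |f x|

/-- The weak topology `σ(X, (X,t)')`. -/
def weakTopOf (t : TopologicalSpace X) : TopologicalSpace X :=
  ⨅ f : {f : X →ₗ[ℝ] ℝ // @Continuous X ℝ t _ f},
    TopologicalSpace.induced (⇑f.1) inferInstance

/-- `(X,t)` is semi-reflexive: every `t`-(von Neumann-)bounded set is relatively compact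
for the weak topology `σ(X,(X,t)')`. -/
def SemiReflexiveTop (t : TopologicalSpace X) : Prop :=
  ∀ S : Set X, @Bornology.IsVonNBounded ℝ X _ _ _ t S →
    @IsCompact X (weakTopOf t) (@closure X (weakTopOf t) S)

/-- A set is sequentially open for the topology `t`. -/
def SeqOpenSet (t : TopologicalSpace X) (s : Set X) : Prop :=
  ∀ (u : ℕ → X) (x : X), x ∈ s → Filter.Tendsto u atTop (@nhds X t x) →
    ∀ᶠ n in atTop, u n ∈ s

/-- `(X,t)` is C-sequential: every convex sequentially open set is open. -/
def CSequentialTop (t : TopologicalSpace X) : Prop :=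
  ∀ s : Set X, Convex ℝ s → SeqOpenSet t s → @IsOpen X t s

end Defs



namespace Statements

open LumerPhillips Filter Topology Set

variable {X : Type*}


section Aux

variable [NormedAddCommGroup X] [NormedSpace ℝ X]

lemma aux_topLe (p q : Seminorm ℝ X) (C : NNReal) (h : ∀ x, q x ≤ (C : ℝ) * p x) :
    p.toSeminormedAddCommGroup.toUniformSpace.toTopologicalSpace ≤
      q.toSeminormedAddCommGroup.toUniformSpace.toTopologicalSpace := by
  have hl := @LipschitzWith.of_dist_le_mul X X
    p.toSeminormedAddCommGroup.toPseudoMetricSpace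
    q.toSeminormedAddCommGroup.toPseudoMetricSpace C id
    (fun x y => h (-x + y))
  have hc := @LipschitzWith.continuous X X
    p.toSeminormedAddCommGroup.toPseudoMetricSpace.toPseudoEMetricSpace
    q.toSeminormedAddCommGroup.toPseudoMetricSpace.toPseudoEMetricSpace C id hl
  exact (@continuous_id_iff_le X
    p.toSeminormedAddCommGroup.toUniformSpace.toTopologicalSpace
    q.toSeminormedAddCommGroup.toUniformSpace.toTopologicalSpace).mp hc

lemma aux_norming_le {Γ : Set (Seminorm ℝ X)} (hΓ : NormingSeminorms Γ) {p : Seminorm ℝ X}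
    (hp : p ∈ Γ) (x : X) : p x ≤ ‖x‖ := by
  by_cases hb : BddAbove (Set.range fun q : Γ => (q : Seminorm ℝ X) x)
  · rw [hΓ x]
    exact le_ciSup hb ⟨p, hp⟩
  · have hx : ‖x‖ = 0 := (hΓ x).trans (Real.iSup_of_not_bddAbove hb)
    have hx0 : x = 0 := norm_eq_zero.mp hx
    simp [hx0]

lemma aux_bdd {Γτ : Set (Seminorm ℝ X)} (hN : NormingSeminorms Γτ)
    {pn : ℕ → Seminorm ℝ X} {an : ℕ → ℝ}
    (hpn : ∀ n, pn n ∈ Γτ) (h01 : ∀ n, 0 ≤ an n ∧ an n ≤ 1) (x : X) :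
    ∀ n, pn n x * an n ≤ ‖x‖ := fun n =>
  calc pn n x * an n ≤ ‖x‖ * 1 :=
        mul_le_mul (aux_norming_le hN (hpn n) x) (h01 n).2 (h01 n).1 (norm_nonneg x)
    _ = ‖x‖ := mul_one _

lemma aux_mem_one_of_mem {Γτ : Set (Seminorm ℝ X)} {p : Seminorm ℝ X} (hp : p ∈ Γτ) :
    p ∈ SubmixedSetOne Γτ := by
  refine ⟨fun _ => p, fun n => if n = 0 then 1 else 0, fun _ => hp, ?_, ?_, ?_⟩
  · intro n; by_cases h : n = 0 <;> simp [h]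
  · apply tendsto_const_nhds.congr'
    filter_upwards [eventually_ge_atTop 1] with n hn
    have : n ≠ 0 := by omega
    simp [this]
  · intro x
    apply le_antisymm
    · have hb : BddAbove (Set.range fun n : ℕ => p x * (if n = 0 then 1 else 0)) := by
        refine ⟨p x, ?_⟩
        rintro y ⟨n, rfl⟩
        by_cases h : n = 0 <;> simp [h, apply_nonneg]
      simpa using le_ciSup hb 0
    · refine Real.iSup_le (fun n => ?_) (apply_nonneg _ _)
      by_cases h : n = 0 <;> simp [h, apply_nonneg]

lemma aux_exists_scale {Γτ : Set (Seminorm ℝ X)} {q : Seminorm ℝ X}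
    (hq : q ∈ SubmixedSet Γτ) :
    ∃ q' ∈ SubmixedSetOne Γτ, ∃ C : NNReal, ∀ x, q x ≤ (C : ℝ) * q' x := by
  obtain ⟨pn, an, hpn, hnn, hnull, hval⟩ := hq
  obtain ⟨N, hNlt⟩ : ∃ N, ∀ n ≥ N, an n < 1 := by
    obtain ⟨N, hN⟩ := Metric.tendsto_atTop.mp hnull 1 one_pos
    refine ⟨N, fun n hn => ?_⟩
    have := hN n hn
    rw [Real.dist_eq, sub_zero] at this
    exact (abs_lt.mp this).2
  set c : ℝ := 1 + ∑ i ∈ Finset.range (N + 1), an i with hc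
  have hsum : 0 ≤ ∑ i ∈ Finset.range (N + 1), an i := Finset.sum_nonneg fun i _ => hnn i
  have hc1 : 1 ≤ c := le_add_of_nonneg_right hsum
  have hc0 : 0 < c := lt_of_lt_of_le one_pos hc1
  have hanc : ∀ n, an n ≤ c := by
    intro n
    rcases le_or_gt n N with h | h
    · have : an n ≤ ∑ i ∈ Finset.range (N + 1), an i :=
        Finset.single_le_sum (fun i _ => hnn i) (Finset.mem_range.mpr (by omega))
      linarith
    · have := hNlt n h.le
      linarith
  set C : NNReal := ⟨c, hc0.le⟩ with hC
  have hCc : (C : ℝ) = c := rfl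
  have happ : ∀ x, (C⁻¹ • q) x = c⁻¹ * q x := by
    intro x
    rw [Seminorm.smul_apply, NNReal.smul_def, NNReal.coe_inv, hCc, smul_eq_mul]
  refine ⟨C⁻¹ • q, ⟨pn, fun n => an n / c, hpn, ?_, ?_, ?_⟩, C, ?_⟩
  · intro n
    exact ⟨div_nonneg (hnn n) hc0.le, (div_le_one hc0).mpr (hanc n)⟩
  · simpa using hnull.div_const c
  · intro x
    rw [happ x, hval, Real.mul_iSup_of_nonneg (inv_nonneg.mpr hc0.le)]
    congr 1
    funext n
    simp only
    rw [div_eq_mul_inv]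
    ring
  · intro x
    rw [happ x, hCc, ← mul_assoc, mul_inv_cancel₀ hc0.ne', one_mul]

end Aux

theorem statement1 [NormedAddCommGroup X] [NormedSpace ℝ X] [CompleteSpace X]
    (τ γs : TopologicalSpace X) (Γτ : Set (Seminorm ℝ X))
    (hSaks : IsSaksSystem τ Γτ)
    (hγs : GeneratesTop (SubmixedSet Γτ) γs) :
    DirectedSeminorms (SubmixedSetOne Γτ) ∧ GeneratesTop (SubmixedSetOne Γτ) γs ∧
      NormingSeminorms (SubmixedSetOne Γτ) := by
  have hN : NormingSeminorms Γτ := hSaks.2.2.2.2.2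
  have hsub : SubmixedSetOne Γτ ⊆ SubmixedSet Γτ := by
    rintro q ⟨pn, an, h1, h2, h3, h4⟩
    exact ⟨pn, an, h1, fun n => (h2 n).1, h3, h4⟩
  refine ⟨?_, ⟨?_, ?_⟩, ?_⟩
  · -- Directedness
    intro q1 hq1 q2 hq2
    obtain ⟨pn, an, hp1, h01a, hnulla, hva⟩ := hq1
    obtain ⟨pm, bm, hp2, h01b, hnullb, hvb⟩ := hq2
    set Pn : ℕ → Seminorm ℝ X := fun n => if Even n then pn (n / 2) else pm (n / 2) with hPn
    set An : ℕ → ℝ := fun n => if Even n then an (n / 2) else bm (n / 2) with hAn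
    have hpc : ∀ n, Pn n ∈ Γτ := by
      intro n; by_cases h : Even n <;> simp [hPn, h, hp1, hp2]
    have h01c : ∀ n, 0 ≤ An n ∧ An n ≤ 1 := by
      intro n
      by_cases h : Even n
      · simpa [hAn, h] using h01a (n / 2)
      · simpa [hAn, h] using h01b (n / 2)
    have he2 : ∀ k : ℕ, Even (2 * k) := fun k => even_two_mul k
    have hd2 : ∀ k : ℕ, 2 * k / 2 = k := fun k => by omega
    have ho2 : ∀ k : ℕ, ¬ Even (2 * k + 1) := fun k => by rw [Nat.even_iff]; omega
    have hod : ∀ k : ℕ, (2 * k + 1) / 2 = k := fun k => by omega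
    refine ⟨q1 ⊔ q2, ⟨Pn, An, hpc, h01c, ?_, ?_⟩, le_sup_left, le_sup_right⟩
    · rw [Metric.tendsto_atTop]
      intro ε hε
      obtain ⟨N1, h1⟩ := Metric.tendsto_atTop.mp hnulla ε hε
      obtain ⟨N2, h2⟩ := Metric.tendsto_atTop.mp hnullb ε hε
      refine ⟨2 * max N1 N2, fun n hn => ?_⟩
      have hdiv : max N1 N2 ≤ n / 2 := by omega
      by_cases h : Even n
      · simpa [hAn, h] using h1 (n / 2) (le_trans (le_max_left _ _) hdiv)
      · simpa [hAn, h] using h2 (n / 2) (le_trans (le_max_right _ _) hdiv)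
    · intro x
      have hbdd : BddAbove (Set.range fun n => Pn n x * An n) := by
        refine ⟨‖x‖, ?_⟩
        rintro y ⟨n, rfl⟩
        exact aux_bdd hN hpc h01c x n
      have hbdd1 : BddAbove (Set.range fun k => pn k x * an k) := by
        refine ⟨‖x‖, ?_⟩
        rintro y ⟨k, rfl⟩
        exact aux_bdd hN hp1 h01a x k
      have hbdd2 : BddAbove (Set.range fun k => pm k x * bm k) := by
        refine ⟨‖x‖, ?_⟩
        rintro y ⟨k, rfl⟩
        exact aux_bdd hN hp2 h01b x k
      rw [Seminorm.sup_apply]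
      apply le_antisymm
      · rw [sup_le_iff]
        constructor
        · rw [hva]
          refine Real.iSup_le (fun k => ?_)
            (Real.iSup_nonneg fun n => mul_nonneg (apply_nonneg _ _) (h01c n).1)
          have heq : pn k x * an k = Pn (2 * k) x * An (2 * k) := by
            simp [hPn, hAn, he2 k, hd2 k]
          rw [heq]
          exact le_ciSup hbdd (2 * k)
        · rw [hvb]
          refine Real.iSup_le (fun k => ?_)
            (Real.iSup_nonneg fun n => mul_nonneg (apply_nonneg _ _) (h01c n).1)
          have heq : pm k x * bm k = Pn (2 * k + 1) x * An (2 * k + 1) := by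
            simp [hPn, hAn, ho2 k, hod k]
          rw [heq]
          exact le_ciSup hbdd (2 * k + 1)
      · refine Real.iSup_le (fun n => ?_)
          (le_trans (apply_nonneg q1 x) le_sup_left)
        by_cases h : Even n
        · have heq : Pn n x * An n = pn (n / 2) x * an (n / 2) := by simp [hPn, hAn, h]
          refine le_trans ?_ (le_sup_left : q1 x ≤ _)
          rw [heq, hva]
          exact le_ciSup hbdd1 (n / 2)
        · have heq : Pn n x * An n = pm (n / 2) x * bm (n / 2) := by simp [hPn, hAn, h]
          refine le_trans ?_ (le_sup_right : q2 x ≤ _)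
          rw [heq, hvb]
          exact le_ciSup hbdd2 (n / 2)
  · -- continuity
    intro q hq
    exact hγs.1 q (hsub hq)
  · -- topology
    rw [hγs.2]
    apply le_antisymm
    · apply le_iInf
      rintro ⟨q, hq⟩
      exact iInf_le _ (⟨q, hsub hq⟩ : SubmixedSet Γτ)
    · apply le_iInf
      rintro ⟨q, hq⟩
      obtain ⟨q', hq', C, hC⟩ := aux_exists_scale hq
      exact le_trans (iInf_le _ (⟨q', hq'⟩ : SubmixedSetOne Γτ)) (aux_topLe q' q C hC)
  · -- norming
    intro x
    have hbO : BddAbove (Set.range fun q : SubmixedSetOne Γτ => (q : Seminorm ℝ X) x) := by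
      refine ⟨‖x‖, ?_⟩
      rintro y ⟨⟨q, hq⟩, rfl⟩
      obtain ⟨pn, an, h1, h2, h3, h4⟩ := hq
      simp only
      rw [h4]
      exact Real.iSup_le (aux_bdd hN h1 h2 x) (norm_nonneg x)
    apply le_antisymm
    · rw [hN x]
      refine Real.iSup_le (fun p => ?_)
        (Real.iSup_nonneg fun q => apply_nonneg _ _)
      exact le_ciSup hbO (⟨p.1, aux_mem_one_of_mem p.2⟩ : SubmixedSetOne Γτ)
    · refine Real.iSup_le (fun q => ?_) (norm_nonneg x)
      obtain ⟨pn, an, h1, h2, h3, h4⟩ := q.2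
      rw [h4]
      exact Real.iSup_le (aux_bdd hN h1 h2 x) (norm_nonneg x)

end Statements
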